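/- For each fixed integer k ≥ 0, the ratio S(n,k)/B_n tends to 0 as n → ∞, where B_n is the number of partitions of the set {1,…,n} and S(n,k) is the number of partitions of {1,…,n} having exactly k blocks of size 1. -/

import Mathlib

open Finset Filter

/-- The Bell number: the number of partitions of the set `{1,…,n}`. -/
noncomputable def bell (n : ℕ) : ℕ :=
  Nat.card (Finpartition (Finset.univ : Finset (Fin n)))

/-- The number of partitions of `{1,…,n}` with exactly `k` blocks of size 1
(singleton blocks). -/
noncomputable def partSingletons (n k : ℕ) : ℕ :=
  Nat.card {P : Finpartition (Finset.univ : Finset (Fin n)) //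
    (P.parts.filter (fun b => b.card = 1)).card = k}

open scoped Classical
set_option linter.unusedSectionVars false
set_option linter.unusedTactic false
set_option linter.unreachableTactic false
set_option maxHeartbeats 1600000

namespace SPS


/-- number of singleton blocks -/
noncomputable def sing {α : Type*} [DecidableEq α] {s : Finset α} (P : Finpartition s) : ℕ :=
  (P.parts.filter (fun b => b.card = 1)).card

noncomputable def S (n j : ℕ) : Finset (Finpartition (univ : Finset (Fin n))) :=
  univ.filter (fun P => sing P = j)

theorem parts_eq_image_part {α : Type*} [DecidableEq α] {s : Finset α} (P : Finpartition s) :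
    P.parts = s.image P.part := by
  apply Finset.Subset.antisymm
  · intro p hp
    obtain ⟨x, hx, hxp⟩ := P.part_surjOn hp
    exact mem_image.2 ⟨x, hx, hxp⟩
  · intro p hp
    obtain ⟨x, hx, rfl⟩ := mem_image.1 hp
    exact P.part_mem.2 hx

theorem part_congr {α : Type*} [DecidableEq α] {s : Finset α} {P Q : Finpartition s}
    (h : P.parts = Q.parts) : P.part = Q.part := by
  funext x
  by_cases hx : x ∈ s
  · exact (Q.part_eq_of_mem (h ▸ P.part_mem.2 hx) (P.mem_part hx)).symm
  · simp [Finpartition.part, hx]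

theorem part_card_pos {α : Type*} [DecidableEq α] {s : Finset α} (P : Finpartition s)
    {p : Finset α} (hp : p ∈ P.parts) : p.Nonempty :=
  Finpartition.nonempty_of_mem_parts P hp


theorem mem_S {n j : ℕ} {P : Finpartition (univ : Finset (Fin n))} :
    P ∈ S n j ↔ sing P = j := by
  unfold S; rw [Finset.mem_filter]; simp

variable {α β : Type*} [DecidableEq α] [DecidableEq β] [Fintype α] [Fintype β]

/-- transfer a finpartition of `univ` along an equivalence -/
noncomputable def transfer (e : α ≃ β) (P : Finpartition (univ : Finset α)) :
    Finpartition (univ : Finset β) where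
  parts := P.parts.image (fun p => p.image e)
  supIndep := by
    rw [Finset.supIndep_iff_pairwiseDisjoint]
    intro p hp q hq hpq
    simp only [coe_image, Set.mem_image, mem_coe] at hp hq
    obtain ⟨p', hp', rfl⟩ := hp
    obtain ⟨q', hq', rfl⟩ := hq
    have hne : p' ≠ q' := fun h => hpq (by rw [h])
    have := P.disjoint hp' hq' hne
    simp only [Finset.disjoint_left, id] at this ⊢
    rintro x hx hx'
    simp only [Finset.mem_image] at hx hx'
    obtain ⟨y, hy, rfl⟩ := hx
    obtain ⟨z, hz, hzy⟩ := hx'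
    exact this hy (by rwa [e.injective hzy] at hz)
  sup_parts := by
    apply Finset.Subset.antisymm (Finset.subset_univ _)
    intro b _
    have hx : e.symm b ∈ (univ : Finset α) := mem_univ _
    rw [← P.sup_parts] at hx
    rw [Finset.mem_sup] at hx ⊢
    obtain ⟨p, hp, hbp⟩ := hx
    exact ⟨p.image e, mem_image_of_mem _ hp, by
      simpa using Finset.mem_image_of_mem e hbp⟩
  bot_notMem := by
    simp only [Finset.bot_eq_empty, mem_image]
    rintro ⟨p, hp, hpe⟩
    have := Finpartition.nonempty_of_mem_parts P hp
    rw [Finset.image_eq_empty] at hpe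
    exact this.ne_empty hpe

theorem image_image_injOn (e : α ≃ β) (s : Finset (Finset α)) :
    Set.InjOn (fun p : Finset α => p.image e) ↑s := by
  intro p _ q _ h
  have : (p.image e).image e.symm = (q.image e).image e.symm := by
    simp only at h; rw [h]
  simpa [Finset.image_image, Function.comp, Finset.image_id'] using this

theorem transfer_parts_card (e : α ≃ β) (P : Finpartition (univ : Finset α)) :
    (transfer e P).parts.card = P.parts.card :=
  Finset.card_image_of_injOn (image_image_injOn e P.parts)

theorem transfer_sing (e : α ≃ β) (P : Finpartition (univ : Finset α)) :
    sing (transfer e P) = sing P := by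
  unfold sing transfer
  simp only
  rw [Finset.filter_image]
  rw [Finset.card_image_of_injOn ((image_image_injOn e P.parts).mono (by
    intro p hp; exact (Finset.mem_filter.1 hp).1))]
  congr 1
  apply Finset.filter_congr
  intro p _
  simp [Finset.card_image_of_injective _ e.injective]

theorem transfer_transfer (e : α ≃ β) (P : Finpartition (univ : Finset α)) :
    transfer e.symm (transfer e P) = P := by
  apply Finpartition.ext
  show (P.parts.image (fun p => p.image e)).image (fun p => p.image e.symm) = P.parts
  rw [Finset.image_image]
  have : ((fun p : Finset β => p.image e.symm) ∘ (fun p : Finset α => p.image e)) = id := by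
    funext p
    simp [Finset.image_image, Function.comp, Finset.image_id']
  rw [this, Finset.image_id]

theorem transfer_injective (e : α ≃ β) : Function.Injective (transfer e) := by
  intro P Q h
  rw [← transfer_transfer e P, h, transfer_transfer]


section Lower

variable {m a c : ℕ}

abbrev Gam (m a c : ℕ) := Fin m ⊕ ((Fin a × Fin 2) ⊕ Fin c)
abbrev Lab (m a : ℕ) := Fin m ⊕ Fin a

def labelFun (f : Fin c → Fin a) : Gam m a c → Lab m a
  | Sum.inl i => Sum.inl i
  | Sum.inr (Sum.inl (j, _)) => Sum.inr j
  | Sum.inr (Sum.inr t) => Sum.inr (f t)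

def lowerSetoid (f : Fin c → Fin a) : Setoid (Gam m a c) where
  r y z := labelFun f y = labelFun f z
  iseqv := ⟨fun _ => rfl, Eq.symm, Eq.trans⟩

noncomputable def lowerOf (f : Fin c → Fin a) : Finpartition (univ : Finset (Gam m a c)) :=
  Finpartition.ofSetoid (lowerSetoid f)

theorem lowerOf_part (f : Fin c → Fin a) (y : Gam m a c) :
    (lowerOf f).part y = univ.filter (fun z => labelFun f y = labelFun f z) := by
  ext z
  simp only [mem_filter, mem_univ, true_and]
  exact Finpartition.mem_part_ofSetoid_iff_rel

theorem labelFun_surj (f : Fin c → Fin a) : Function.Surjective (labelFun (m := m) f) := by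
  rintro (i | j)
  · exact ⟨Sum.inl i, rfl⟩
  · exact ⟨Sum.inr (Sum.inl (j, 0)), rfl⟩

theorem lowerOf_sing (f : Fin c → Fin a) : sing (lowerOf (m := m) f) = m := by
  unfold sing
  have h : Gam m a c → Lab m a := labelFun f
  set h : Gam m a c → Lab m a := labelFun f with hh
  set F : Lab m a → Finset (Gam m a c) :=
    fun v => univ.filter (fun z => v = h z) with hF
  have hparts : (lowerOf (m := m) f).parts = (univ.image h).image F := by
    rw [parts_eq_image_part (lowerOf (m := m) f), Finset.image_image]
    apply Finset.image_congr
    intro y _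
    rw [lowerOf_part f y]
    rfl
  have himg : univ.image h = (univ : Finset (Lab m a)) :=
    Finset.image_univ_of_surjective (labelFun_surj f)
  rw [hparts, himg]
  have hmemF : ∀ (v : Lab m a) (z : Gam m a c), z ∈ F v ↔ v = h z := by
    intro v z; simp [hF]
  have hinj : Set.InjOn F ↑(univ : Finset (Lab m a)) := by
    intro v _ w _ hvw
    obtain ⟨y, hy⟩ := labelFun_surj f v
    have hyv : y ∈ F v := (hmemF v y).2 hy.symm
    rw [hvw] at hyv
    rw [(hmemF w y).1 hyv]; exact hy.symm ▸ rfl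
  rw [Finset.filter_image, Finset.card_image_of_injOn (hinj.mono (by
    intro v hv; exact (Finset.mem_filter.1 hv).1))]
  have hfib : ∀ i : Fin m, F (Sum.inl i) = {Sum.inl i} := by
    intro i
    ext z
    rw [hmemF]
    constructor
    · intro hz
      match z, hz with
      | Sum.inl i', hz =>
        have : i = i' := by
          have : (Sum.inl i : Lab m a) = Sum.inl i' := hz
          exact Sum.inl_injective this
        simp [this]
    · rintro hz
      simp only [Finset.mem_singleton] at hz
      subst hz; rfl
  have hfib2 : ∀ j : Fin a, 2 ≤ (F (Sum.inr j)).card := by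
    intro j
    have hsub : ({Sum.inr (Sum.inl (j, 0)), Sum.inr (Sum.inl (j, 1))} : Finset (Gam m a c)) ⊆
        F (Sum.inr j) := by
      intro z hz
      simp only [Finset.mem_insert, Finset.mem_singleton] at hz
      rcases hz with rfl | rfl <;> exact (hmemF _ _).2 rfl
    calc 2 = ({Sum.inr (Sum.inl (j, 0)), Sum.inr (Sum.inl (j, 1))} : Finset (Gam m a c)).card := by
              simp
      _ ≤ _ := Finset.card_le_card hsub
  have hsplit : (univ.filter (fun v : Lab m a => (F v).card = 1)) =
      (univ : Finset (Fin m)).image Sum.inl := by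
    ext v
    simp only [mem_filter, mem_univ, true_and, mem_image]
    constructor
    · intro hv
      match v with
      | Sum.inl i =>
        first
          | exact ⟨i, mem_univ _, rfl⟩
          | exact ⟨i, rfl⟩
      | Sum.inr j =>
        exfalso
        have := hfib2 j
        omega
    · intro hi
      obtain ⟨i, rfl⟩ : ∃ i, Sum.inl i = v := by
        first
          | exact hi
          | (obtain ⟨i, _, h⟩ := hi; exact ⟨i, h⟩)
      rw [hfib i]; simp
  rw [hsplit, Finset.card_image_of_injective _ Sum.inl_injective, card_univ, Fintype.card_fin]

theorem lowerOf_injective : Function.Injective (lowerOf (m := m) (a := a) (c := c)) := by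
  intro f g h
  funext t
  have hmem : (Sum.inr (Sum.inr t) : Gam m a c) ∈
      (lowerOf f).part (Sum.inr (Sum.inl (f t, 0))) := by
    rw [lowerOf_part]
    simp only [mem_filter, mem_univ, true_and]
    rfl
  rw [h, lowerOf_part] at hmem
  rw [mem_filter] at hmem
  simp only [mem_univ, true_and, labelFun] at hmem
  exact Sum.inr_injective hmem

theorem lower_bound {n : ℕ} (m a c : ℕ) (hn : m + (2 * a + c) = n) :
    a ^ c ≤ (S n m).card := by
  have hcard : Fintype.card (Gam m a c) = n := by
    simp [Fintype.card_sum, Fintype.card_prod]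
    omega
  let e := Fintype.equivFinOfCardEq hcard
  have : (univ : Finset (Fin c → Fin a)).card ≤ (S n m).card := by
    apply Finset.card_le_card_of_injOn (fun f => transfer e (lowerOf f))
    · intro f _
      simp only [S, Finset.mem_coe, mem_filter, mem_univ, true_and]
      rw [transfer_sing, lowerOf_sing]
    · intro f _ g _ h
      exact lowerOf_injective (transfer_injective e h)
  calc a ^ c = (univ : Finset (Fin c → Fin a)).card := by
        simp [card_univ]
    _ ≤ _ := this

end Lower

section Many

variable {n : ℕ}

noncomputable def minOpt (s : Finset (Fin n)) : Option (Fin n) :=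
  if h : s.Nonempty then some (s.min' h) else none

theorem minOpt_mem {s : Finset (Fin n)} {a : Fin n} (h : minOpt s = some a) : a ∈ s := by
  unfold minOpt at h
  split at h
  · cases h; exact Finset.min'_mem _ _
  · cases h

theorem minOpt_of_nonempty {s : Finset (Fin n)} (h : s.Nonempty) :
    minOpt s = some (s.min' h) := by
  unfold minOpt; rw [dif_pos h]

noncomputable def minMap (P : Finpartition (univ : Finset (Fin n))) : Fin n → Option (Fin n) :=
  fun y => minOpt (P.part y)

theorem part_nonempty (P : Finpartition (univ : Finset (Fin n))) (y : Fin n) :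
    (P.part y).Nonempty := ⟨y, P.mem_part (mem_univ y)⟩

theorem minMap_self (P : Finpartition (univ : Finset (Fin n))) {y z : Fin n}
    (h : minMap P z = some y) : minMap P y = some y := by
  have hy : y ∈ P.part z := minOpt_mem h
  have : P.part y = P.part z := P.part_eq_of_mem (P.part_mem.2 (mem_univ z)) hy
  unfold minMap
  rw [this]; exact h

/-- fibers of `minMap` are the parts -/
theorem part_eq_minMap_fiber (P : Finpartition (univ : Finset (Fin n))) (y : Fin n) :
    P.part y = univ.filter (fun z => minMap P z = minMap P y) := by
  ext z
  simp only [mem_filter, mem_univ, true_and]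
  constructor
  · intro hz
    have : P.part z = P.part y := P.part_eq_of_mem (P.part_mem.2 (mem_univ y)) hz
    unfold minMap; rw [this]
  · intro hz
    have h1 := minOpt_of_nonempty (part_nonempty P y)
    have h2 := minOpt_of_nonempty (part_nonempty P z)
    unfold minMap at hz
    rw [h1, h2] at hz
    have hmem : (P.part y).min' (part_nonempty P y) ∈ P.part z := by
      have := Finset.min'_mem (P.part z) (part_nonempty P z)
      rwa [Option.some_inj.1 hz] at this
    have : P.part z = P.part y :=
      P.eq_of_mem_parts (P.part_mem.2 (mem_univ z)) (P.part_mem.2 (mem_univ y)) hmem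
        (Finset.min'_mem _ _)
    rw [← this]; exact P.mem_part (mem_univ z)

theorem minMap_injective : Function.Injective (minMap (n := n)) := by
  intro P Q h
  apply Finpartition.ext
  rw [parts_eq_image_part P, parts_eq_image_part Q]
  apply Finset.image_congr
  intro y _
  rw [part_eq_minMap_fiber P y, part_eq_minMap_fiber Q y, h]

theorem card_parts_le_image (P : Finpartition (univ : Finset (Fin n))) :
    P.parts.card ≤ (univ.image (minMap P)).card := by
  apply Finset.card_le_card_of_injOn (fun p => minOpt p)
  · intro p hp
    obtain ⟨y, hy⟩ := Finpartition.nonempty_of_mem_parts P hp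
    have hpy : P.part y = p := P.part_eq_of_mem hp hy
    exact mem_image.2 ⟨y, mem_univ _, by unfold minMap; rw [hpy]⟩
  · intro p hp q hq hpq
    have hp' := Finpartition.nonempty_of_mem_parts P hp
    have hq' := Finpartition.nonempty_of_mem_parts P hq
    simp only at hpq
    rw [minOpt_of_nonempty hp', minOpt_of_nonempty hq'] at hpq
    have : p.min' hp' ∈ q := Option.some_inj.1 hpq ▸ Finset.min'_mem q hq'
    exact P.eq_of_mem_parts hp hq (Finset.min'_mem p hp') this

/-- Partitions with at least `B` parts are few. -/
theorem manyParts_bound (n B : ℕ) :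
    ((univ : Finset (Finpartition (univ : Finset (Fin n)))).filter
      (fun P => B ≤ P.parts.card)).card ≤ 2 ^ (n + 1) * (n + 1) ^ (n - B) := by
  classical
  set tgt : Finset ((_ : Finset (Option (Fin n))) × (Fin n → Option (Fin n))) :=
    ((univ : Finset (Finset (Option (Fin n)))).filter
        (fun M => B ≤ M.card ∧ none ∉ M)).sigma
      (fun M => Fintype.piFinset
        (fun y : Fin n => if some y ∈ M then ({some y} : Finset (Option (Fin n))) else M))
    with htgt
  have hmain : ((univ : Finset (Finpartition (univ : Finset (Fin n)))).filter
      (fun P => B ≤ P.parts.card)).card ≤ tgt.card := by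
    apply Finset.card_le_card_of_injOn (fun P => ⟨univ.image (minMap P), minMap P⟩)
    · intro P hP
      simp only [Finset.mem_coe, mem_filter, mem_univ, true_and] at hP
      rw [htgt, Finset.mem_coe, Finset.mem_sigma]
      constructor
      · simp only [mem_filter, mem_univ, true_and]
        refine ⟨le_trans hP (card_parts_le_image P), ?_⟩
        intro hnone
        obtain ⟨y, _, hy⟩ := mem_image.1 hnone
        unfold minMap at hy
        rw [minOpt_of_nonempty (part_nonempty P y)] at hy
        cases hy
      · rw [Fintype.mem_piFinset]
        intro y
        by_cases hy : some y ∈ univ.image (minMap P)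
        · rw [if_pos hy]
          obtain ⟨z, _, hz⟩ := mem_image.1 hy
          rw [Finset.mem_singleton]
          exact minMap_self P hz
        · rw [if_neg hy]
          exact mem_image.2 ⟨y, mem_univ _, rfl⟩
    · intro P _ Q _ h
      simp only [Sigma.mk.inj_iff, heq_eq_eq] at h
      exact minMap_injective h.2
  refine hmain.trans ?_
  rw [htgt, Finset.card_sigma]
  have hterm : ∀ M ∈ (univ : Finset (Finset (Option (Fin n)))).filter
      (fun M => B ≤ M.card ∧ none ∉ M),
      (Fintype.piFinset
        (fun y : Fin n => if some y ∈ M then ({some y} : Finset (Option (Fin n))) else M)).card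
        ≤ (n + 1) ^ (n - B) := by
    intro M hM
    simp only [mem_filter, mem_univ, true_and] at hM
    rw [Fintype.card_piFinset]
    have : ∀ y : Fin n,
        (if some y ∈ M then ({some y} : Finset (Option (Fin n))) else M).card
        = if some y ∈ M then 1 else M.card := by
      intro y; split <;> simp
    rw [Finset.prod_congr rfl (fun y _ => this y), Finset.prod_ite (fun _ => 1) (fun _ => M.card),
      Finset.prod_const, Finset.prod_const, one_pow, one_mul]
    have hMn : M.card ≤ n + 1 := by
      calc M.card ≤ Fintype.card (Option (Fin n)) := Finset.card_le_univ M
        _ = n + 1 := by simp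
    have hBle : B ≤ (univ.filter (fun y : Fin n => some y ∈ M)).card := by
      refine le_trans hM.1 (Finset.card_le_card_of_surjOn (fun y : Fin n => some y) ?_)
      intro v hv
      simp only [Finset.coe_filter, mem_univ, true_and, Set.mem_setOf_eq, Set.mem_image] at hv ⊢
      match v with
      | none => exact absurd hv hM.2
      | some y => exact ⟨y, hv, rfl⟩
    have hcount : (univ.filter (fun y : Fin n => ¬ some y ∈ M)).card ≤ n - B := by
      have := Finset.card_filter_add_card_filter_not
        (s := (univ : Finset (Fin n))) (p := fun y => some y ∈ M)
      simp only [card_univ, Fintype.card_fin] at this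
      omega
    calc M.card ^ (univ.filter (fun y : Fin n => ¬ some y ∈ M)).card
        ≤ (n + 1) ^ (univ.filter (fun y : Fin n => ¬ some y ∈ M)).card :=
          Nat.pow_le_pow_left hMn _
      _ ≤ (n + 1) ^ (n - B) := Nat.pow_le_pow_right (by omega) hcount
  calc ∑ M ∈ (univ : Finset (Finset (Option (Fin n)))).filter
        (fun M => B ≤ M.card ∧ none ∉ M),
        (Fintype.piFinset
          (fun y : Fin n => if some y ∈ M then ({some y} : Finset (Option (Fin n))) else M)).card
      ≤ ∑ _M ∈ (univ : Finset (Finset (Option (Fin n)))).filter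
        (fun M => B ≤ M.card ∧ none ∉ M), (n + 1) ^ (n - B) := Finset.sum_le_sum hterm
    _ ≤ 2 ^ (n + 1) * (n + 1) ^ (n - B) := by
        rw [Finset.sum_const, smul_eq_mul]
        apply Nat.mul_le_mul_right
        calc ((univ : Finset (Finset (Option (Fin n)))).filter _).card
            ≤ (univ : Finset (Finset (Option (Fin n)))).card := Finset.card_filter_le _ _
          _ = 2 ^ (n + 1) := by
              rw [card_univ, Fintype.card_finset]
              simp
  done

end Many

section Split

variable {n : ℕ}

theorem part_nonempty' (P : Finpartition (univ : Finset (Fin n))) (y : Fin n) :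
    (P.part y).Nonempty := ⟨y, P.mem_part (mem_univ y)⟩

variable (P : Finpartition (univ : Finset (Fin n))) (x : Fin n)

theorem part_mem_x : P.part x ∈ P.parts := P.part_mem.2 (mem_univ x)
theorem mem_part_x : x ∈ P.part x := P.mem_part (mem_univ x)

section withH
variable (h3 : 3 ≤ (P.part x).card)
include h3

theorem q_card2 : 2 ≤ ((P.part x).erase x).card := by
  rw [Finset.card_erase_of_mem (mem_part_x P x)]; omega

theorem q_nonempty : ((P.part x).erase x).Nonempty :=
  Finset.card_pos.1 (by have := q_card2 P x h3; omega)

theorem singleton_not_mem : ({x} : Finset (Fin n)) ∉ P.parts := by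
  intro h
  have : P.part x = {x} := P.part_eq_of_mem h (Finset.mem_singleton_self x)
  rw [this] at h3
  simp at h3

theorem q_not_mem_R : (P.part x).erase x ∉ P.parts.erase (P.part x) := by
  intro h
  have hmem := Finset.mem_of_mem_erase h
  have hne := Finset.ne_of_mem_erase h
  obtain ⟨y, hy⟩ := q_nonempty P x h3
  exact hne (P.eq_of_mem_parts hmem (part_mem_x P x) hy (Finset.mem_of_mem_erase hy))

theorem singleton_not_mem_insert :
    ({x} : Finset (Fin n)) ∉ insert ((P.part x).erase x) (P.parts.erase (P.part x)) := by
  intro h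
  rcases Finset.mem_insert.1 h with h | h
  · have : x ∈ (P.part x).erase x := h ▸ Finset.mem_singleton_self x
    exact (Finset.notMem_erase x _) this
  · exact singleton_not_mem P x h3 (Finset.mem_of_mem_erase h)

/-- Split `x` off from its part (which has at least 3 elements) as a new singleton part. -/
noncomputable def split : Finpartition (univ : Finset (Fin n)) where
  parts := insert {x} (insert ((P.part x).erase x) (P.parts.erase (P.part x)))
  supIndep := by
    rw [Finset.supIndep_iff_pairwiseDisjoint]
    rw [Finset.coe_insert, Set.pairwiseDisjoint_insert]
    constructor
    · rw [Finset.coe_insert, Set.pairwiseDisjoint_insert]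
      constructor
      · exact P.disjoint.subset (by
          rw [Finset.coe_subset]; exact Finset.erase_subset _ _)
      · intro r hr _
        have hrp : Disjoint (P.part x) r := by
          apply P.disjoint (part_mem_x P x) (Finset.mem_of_mem_erase (by exact_mod_cast hr))
          exact (Finset.ne_of_mem_erase (by exact_mod_cast hr)).symm
        exact hrp.mono_left (Finset.erase_subset _ _)
    · intro r hr _
      simp only [Finset.coe_insert, Set.mem_insert_iff, Finset.mem_coe] at hr
      rcases hr with rfl | hr
      · simp only [id]
        rw [Finset.disjoint_singleton_left]
        exact Finset.notMem_erase x _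
      · simp only [id]
        rw [Finset.disjoint_singleton_left]
        intro hx
        have hrp : Disjoint (P.part x) r := by
          apply P.disjoint (part_mem_x P x) (Finset.mem_of_mem_erase hr)
          exact (Finset.ne_of_mem_erase hr).symm
        exact (Finset.disjoint_left.1 hrp) (mem_part_x P x) hx
  sup_parts := by
    rw [Finset.sup_insert, Finset.sup_insert]
    simp only [id]
    rw [← sup_assoc]
    have h1 : ({x} : Finset (Fin n)) ⊔ (P.part x).erase x = P.part x := by
      rw [Finset.sup_eq_union, ← Finset.insert_eq, Finset.insert_erase (mem_part_x P x)]
    rw [h1]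
    have h2 : P.part x ⊔ (P.parts.erase (P.part x)).sup id = (insert (P.part x) (P.parts.erase (P.part x))).sup id := by
      rw [Finset.sup_insert]; rfl
    rw [h2, Finset.insert_erase (part_mem_x P x), P.sup_parts]
  bot_notMem := by
    simp only [Finset.bot_eq_empty, Finset.mem_insert]
    push_neg
    refine ⟨(Finset.singleton_ne_empty x).symm, ?_, ?_⟩
    · intro h
      have := q_card2 P x h3
      rw [← h] at this
      simp at this
    · intro h
      exact P.bot_notMem (by rw [Finset.bot_eq_empty]; exact Finset.mem_of_mem_erase h)

theorem split_parts : (split P x h3).parts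
    = insert {x} (insert ((P.part x).erase x) (P.parts.erase (P.part x))) := rfl

theorem singleton_mem_split : ({x} : Finset (Fin n)) ∈ (split P x h3).parts :=
  Finset.mem_insert_self _ _

theorem split_parts_card : (split P x h3).parts.card = P.parts.card + 1 := by
  rw [split_parts]
  rw [Finset.card_insert_of_notMem (singleton_not_mem_insert P x h3)]
  rw [Finset.card_insert_of_notMem (q_not_mem_R P x h3)]
  rw [Finset.card_erase_of_mem (part_mem_x P x)]
  have : 1 ≤ P.parts.card := Finset.card_pos.2 ⟨_, part_mem_x P x⟩
  omega

theorem sing_split : sing (split P x h3) = sing P + 1 := by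
  unfold sing
  rw [split_parts]
  rw [Finset.filter_insert]
  rw [if_pos (Finset.card_singleton x)]
  rw [Finset.filter_insert]
  rw [if_neg (by have := q_card2 P x h3; omega)]
  rw [Finset.card_insert_of_notMem (by
    intro h
    exact singleton_not_mem P x h3 (Finset.mem_of_mem_erase (Finset.mem_of_mem_filter _ h)))]
  congr 1
  have hPparts : P.parts = insert (P.part x) (P.parts.erase (P.part x)) :=
    (Finset.insert_erase (part_mem_x P x)).symm
  conv_rhs => rw [hPparts]
  rw [Finset.filter_insert, if_neg (by omega)]

end withH

/-- total version of split -/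
noncomputable def splitT (P : Finpartition (univ : Finset (Fin n))) (x : Fin n) :
    Finpartition (univ : Finset (Fin n)) :=
  if h : 3 ≤ (P.part x).card then split P x h else P

theorem splitT_eq (P : Finpartition (univ : Finset (Fin n))) (x : Fin n)
    (h : 3 ≤ (P.part x).card) : splitT P x = split P x h := dif_pos h

theorem split_inj {P P' : Finpartition (univ : Finset (Fin n))} {x : Fin n}
    (h3 : 3 ≤ (P.part x).card) (h3' : 3 ≤ (P'.part x).card)
    (hq : (P.part x).erase x = (P'.part x).erase x)
    (hsp : split P x h3 = split P' x h3') : P = P' := by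
  have hparts := congrArg Finpartition.parts hsp
  rw [split_parts, split_parts, ← hq] at hparts
  have h1 : insert ((P.part x).erase x) (P.parts.erase (P.part x))
      = insert ((P.part x).erase x) (P'.parts.erase (P'.part x)) := by
    have e1 := congrArg (fun s => Finset.erase s ({x} : Finset (Fin n))) hparts
    simpa [Finset.erase_insert (singleton_not_mem_insert P x h3),
      Finset.erase_insert (hq ▸ singleton_not_mem_insert P' x h3')] using e1
  have h2 : P.parts.erase (P.part x) = P'.parts.erase (P'.part x) := by
    have e2 := congrArg (fun s => Finset.erase s ((P.part x).erase x)) h1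
    simpa [Finset.erase_insert (q_not_mem_R P x h3),
      Finset.erase_insert (hq ▸ q_not_mem_R P' x h3')] using e2
  have hpx : P.part x = P'.part x := by
    have : insert x ((P.part x).erase x) = insert x ((P'.part x).erase x) := by rw [hq]
    rwa [Finset.insert_erase (mem_part_x P x), Finset.insert_erase (mem_part_x P' x)] at this
  apply Finpartition.ext
  calc P.parts = insert (P.part x) (P.parts.erase (P.part x)) :=
        (Finset.insert_erase (part_mem_x P x)).symm
    _ = insert (P'.part x) (P'.parts.erase (P'.part x)) := by rw [h2, hpx]
    _ = P'.parts := Finset.insert_erase (part_mem_x P' x)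

end Split

section Count
variable {n : ℕ}

/-- at least n - j - 2 b₀ elements lie in parts of size ≥ 3 -/
theorem m3_lower (P : Finpartition (univ : Finset (Fin n))) (j b₀ : ℕ)
    (hs : sing P = j) (hb : P.parts.card ≤ b₀) :
    n ≤ j + 2 * b₀ + (univ.filter (fun y => 3 ≤ (P.part y).card)).card := by
  classical
  have hsplit := Finset.card_filter_add_card_filter_not
    (s := (univ : Finset (Fin n))) (p := fun y => 3 ≤ (P.part y).card)
  rw [card_univ, Fintype.card_fin] at hsplit
  -- bound the complement
  have hsub : (univ.filter (fun y : Fin n => ¬ 3 ≤ (P.part y).card))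
      ⊆ (univ.filter (fun y : Fin n => (P.part y).card = 1))
        ∪ (univ.filter (fun y : Fin n => (P.part y).card = 2)) := by
    intro y hy
    simp only [mem_filter, mem_univ, true_and, mem_union] at hy ⊢
    have : 1 ≤ (P.part y).card := Finset.card_pos.2 (part_nonempty' P y)
    omega
  have hc1 : (univ.filter (fun y : Fin n => (P.part y).card = 1)).card = j := by
    rw [← hs]
    unfold sing
    apply Finset.card_bij (fun y _ => P.part y)
    · intro y hy
      simp only [mem_filter, mem_univ, true_and] at hy ⊢
      exact ⟨part_mem_x P y, hy⟩
    · intro y hy y' hy' h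
      simp only [mem_filter, mem_univ, true_and] at hy hy'
      obtain ⟨z, hz⟩ := Finset.card_eq_one.1 hy
      have h1 : y ∈ P.part y := mem_part_x P y
      have h2 : y' ∈ P.part y' := mem_part_x P y'
      rw [hz] at h1
      rw [← h, hz] at h2
      simp only [Finset.mem_singleton] at h1 h2
      rw [h1, h2]
    · intro p hp
      simp only [mem_filter] at hp
      obtain ⟨z, hz⟩ := Finset.card_eq_one.1 hp.2
      refine ⟨z, ?_, ?_⟩
      · simp only [mem_filter, mem_univ, true_and]
        rw [P.part_eq_of_mem hp.1 (by rw [hz]; exact Finset.mem_singleton_self z), hp.2]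
      · rw [P.part_eq_of_mem hp.1 (by rw [hz]; exact Finset.mem_singleton_self z)]
  have hc2 : (univ.filter (fun y : Fin n => (P.part y).card = 2)).card ≤ 2 * b₀ := by
    have := Finset.card_le_mul_card_image
      (s := univ.filter (fun y : Fin n => (P.part y).card = 2)) (f := fun y => P.part y) 2 ?_
    · refine this.trans ?_
      apply Nat.mul_le_mul_left
      refine le_trans (Finset.card_le_card ?_) hb
      intro p hp
      obtain ⟨y, _, rfl⟩ := Finset.mem_image.1 hp
      exact part_mem_x P y
    · intro p hp
      obtain ⟨y, hy, rfl⟩ := Finset.mem_image.1 hp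
      simp only [mem_filter, mem_univ, true_and] at hy
      calc ((univ.filter (fun z : Fin n => (P.part z).card = 2)).filter
            (fun z => P.part z = P.part y)).card
          ≤ (P.part y).card := by
            apply Finset.card_le_card
            intro z hz
            simp only [mem_filter] at hz
            rw [← hz.2]
            exact mem_part_x P z
        _ = 2 := hy
  have := Finset.card_union_le
    (univ.filter (fun y : Fin n => (P.part y).card = 1))
    (univ.filter (fun y : Fin n => (P.part y).card = 2))
  have := Finset.card_le_card hsub
  omega

/-- Main step-A counting inequality. -/
theorem stepA (n j b₀ : ℕ) :
    ((univ : Finset (Finpartition (univ : Finset (Fin n)))).filter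
        (fun P => sing P = j ∧ P.parts.card ≤ b₀)).card * (n - (j + 2 * b₀))
      ≤ (b₀ + 1) * ((j + 1) * (S n (j + 1)).card) := by
  classical
  set A := (univ : Finset (Finpartition (univ : Finset (Fin n)))).filter
    (fun P => sing P = j ∧ P.parts.card ≤ b₀) with hA
  set D := A.sigma (fun P => univ.filter (fun y => 3 ≤ (P.part y).card)) with hD
  have hmemD : ∀ z : ((_ : Finpartition (univ : Finset (Fin n))) × Fin n), z ∈ D →
      sing z.1 = j ∧ z.1.parts.card ≤ b₀ ∧ 3 ≤ (z.1.part z.2).card := by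
    intro z hz
    rw [hD, Finset.mem_sigma, hA, mem_filter, mem_filter] at hz
    exact ⟨hz.1.2.1, hz.1.2.2, hz.2.2⟩
  have hlow : A.card * (n - (j + 2 * b₀)) ≤ D.card := by
    rw [hD, Finset.card_sigma]
    calc A.card * (n - (j + 2 * b₀)) = A.card • (n - (j + 2 * b₀)) := rfl
      _ ≤ ∑ P ∈ A, (univ.filter (fun y => 3 ≤ (P.part y).card)).card := by
          apply Finset.card_nsmul_le_sum
          intro P hP
          rw [hA, mem_filter] at hP
          have := m3_lower P j b₀ hP.2.1 hP.2.2
          omega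
  set ψ : ((_ : Finpartition (univ : Finset (Fin n))) × Fin n)
      → (Finpartition (univ : Finset (Fin n))) × Fin n :=
    fun z => (splitT z.1 z.2, z.2) with hψ
  have hup : D.card ≤ (b₀ + 1) * (D.image ψ).card := by
    apply Finset.card_le_mul_card_image
    intro b hb
    obtain ⟨z0, hz0, hz0b⟩ := Finset.mem_image.1 hb
    obtain ⟨hz0s, hz0c, hz03⟩ := hmemD z0 hz0
    have hQcard : b.1.parts.card ≤ b₀ + 1 := by
      rw [← hz0b]
      show (splitT z0.1 z0.2).parts.card ≤ b₀ + 1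
      rw [splitT_eq _ _ hz03, split_parts_card]
      omega
    calc (D.filter (fun z => ψ z = b)).card ≤ b.1.parts.card := by
          apply Finset.card_le_card_of_injOn (fun z => (z.1.part z.2).erase z.2)
          · intro z hz
            rw [Finset.mem_coe, mem_filter] at hz
            obtain ⟨hzD, hzb⟩ := hz
            obtain ⟨_, _, hz3⟩ := hmemD z hzD
            rw [← hzb]
            show (z.1.part z.2).erase z.2 ∈ (splitT z.1 z.2).parts
            rw [splitT_eq _ _ hz3, split_parts]
            exact Finset.mem_insert_of_mem (Finset.mem_insert_self _ _)
          · rintro ⟨z1, z2⟩ hz ⟨z1', z2'⟩ hz' hzz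
            simp only [Finset.mem_coe, mem_filter] at hz hz'
            obtain ⟨hzD, hzb⟩ := hz
            obtain ⟨hzD', hzb'⟩ := hz'
            obtain ⟨_, _, hz3⟩ := hmemD _ hzD
            obtain ⟨_, _, hz3'⟩ := hmemD _ hzD'
            have hsnd : z2 = z2' := congrArg Prod.snd (hzb.trans hzb'.symm)
            subst hsnd
            have hfst : splitT z1 z2 = splitT z1' z2 :=
              congrArg Prod.fst (hzb.trans hzb'.symm)
            rw [splitT_eq _ _ hz3, splitT_eq _ _ hz3'] at hfst
            simp only at hzz
            have : z1 = z1' := split_inj hz3 hz3' hzz hfst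
            simp [this]
      _ ≤ b₀ + 1 := hQcard
  set E := (((univ : Finset (Finpartition (univ : Finset (Fin n)))).filter
      (fun Q => sing Q = j + 1)) ×ˢ (univ : Finset (Fin n))).filter
      (fun Qy => ({Qy.2} : Finset (Fin n)) ∈ Qy.1.parts) with hE
  have hmemE : ∀ b : (Finpartition (univ : Finset (Fin n))) × Fin n, b ∈ E →
      sing b.1 = j + 1 ∧ ({b.2} : Finset (Fin n)) ∈ b.1.parts := by
    intro b hb
    rw [hE, mem_filter, Finset.mem_product, mem_filter] at hb
    exact ⟨hb.1.1.2, hb.2⟩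
  have himg : D.image ψ ⊆ E := by
    intro b hb
    obtain ⟨z, hz, rfl⟩ := Finset.mem_image.1 hb
    obtain ⟨hzs, hzc, hz3⟩ := hmemD z hz
    rw [hE, mem_filter, Finset.mem_product, mem_filter]
    refine ⟨⟨⟨mem_univ _, ?_⟩, mem_univ _⟩, ?_⟩
    · show sing (splitT z.1 z.2) = j + 1
      rw [splitT_eq _ _ hz3, sing_split, hzs]
    · show ({z.2} : Finset (Fin n)) ∈ (splitT z.1 z.2).parts
      rw [splitT_eq _ _ hz3]
      exact singleton_mem_split _ _ _
  have himgfst : E.image Prod.fst ⊆ S n (j + 1) := by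
    intro Q hQ
    obtain ⟨b, hb, rfl⟩ := Finset.mem_image.1 hQ
    exact mem_S.2 (hmemE b hb).1
  have hEcard : E.card ≤ (j + 1) * (S n (j + 1)).card := by
    calc E.card ≤ (j + 1) * (E.image Prod.fst).card := by
          apply Finset.card_le_mul_card_image
          intro Q hQ
          obtain ⟨b0, hb0, hb0Q⟩ := Finset.mem_image.1 hQ
          have hsQ : sing Q = j + 1 := hb0Q ▸ (hmemE b0 hb0).1
          have hfib : (E.filter (fun b => b.1 = Q)).card
              ≤ (Q.parts.filter (fun p => p.card = 1)).card := by
            apply Finset.card_le_card_of_injOn (fun b => ({b.2} : Finset (Fin n)))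
            · intro b hb'
              rw [Finset.mem_coe, mem_filter] at hb'
              obtain ⟨hbE, hbQ⟩ := hb'
              rw [Finset.mem_coe, mem_filter]
              exact ⟨hbQ ▸ (hmemE b hbE).2, Finset.card_singleton _⟩
            · rintro ⟨Q1, y⟩ hb ⟨Q1', y'⟩ hb' hyy
              simp only [Finset.mem_coe, mem_filter] at hb hb'
              have h2 : y = y' := Finset.singleton_injective hyy
              simp [h2, hb.2, hb'.2]
          have : (Q.parts.filter (fun p => p.card = 1)).card = j + 1 := hsQ
          omega
      _ ≤ (j + 1) * (S n (j + 1)).card :=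
          Nat.mul_le_mul_left _ (Finset.card_le_card himgfst)
  calc A.card * (n - (j + 2 * b₀)) ≤ D.card := hlow
    _ ≤ (b₀ + 1) * (D.image ψ).card := hup
    _ ≤ (b₀ + 1) * E.card := Nat.mul_le_mul_left _ (Finset.card_le_card himg)
    _ ≤ (b₀ + 1) * ((j + 1) * (S n (j + 1)).card) := Nat.mul_le_mul_left _ hEcard

end Count

end SPS

namespace SPS

noncomputable def aF (m₀ n : ℕ) : ℕ := ⌈(n : ℝ) ^ (1 - (1:ℝ) / (32 * (m₀ + 1)))⌉₊

theorem E1 (m₀ : ℕ) : ∀ᶠ n : ℕ in atTop,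
    2 * (2 ^ (n + 1) * (n + 1) ^ (n - (n / (16 * (m₀ + 1)) + 1)))
      ≤ aF m₀ n ^ (n - (m₀ + 1) - 2 * aF m₀ n)
    ∧ (m₀ + 2) + 2 * aF m₀ n ≤ n
    ∧ 1 ≤ aF m₀ n := by
  set δ : ℝ := (1:ℝ) / (32 * (m₀ + 1)) with hδdef
  have hδpos : 0 < δ := by positivity
  have hδle : δ ≤ 1 / 32 := by
    rw [hδdef]
    apply one_div_le_one_div_of_le (by norm_num)
    nlinarith [Nat.cast_nonneg (α := ℝ) m₀]
  have h2δ : 2 * δ = 1 / (16 * (m₀ + 1)) := by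
    rw [hδdef]; field_simp; ring
  -- eventualities
  have ev1 : ∀ᶠ n : ℕ in atTop,
      2 * ((n:ℝ)) ^ (-δ) + ((m₀:ℝ) + 4) / n < δ / 2 := by
    have t1 : Tendsto (fun n : ℕ => 2 * ((n:ℝ)) ^ (-δ) + ((m₀:ℝ) + 4) / n) atTop (nhds 0) := by
      have a1 : Tendsto (fun n : ℕ => ((n:ℝ)) ^ (-δ)) atTop (nhds 0) :=
        (tendsto_rpow_neg_atTop hδpos).comp tendsto_natCast_atTop_atTop
      have a2 := tendsto_const_div_atTop_nhds_zero_nat ((m₀:ℝ) + 4)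
      have := (a1.const_mul 2).add a2
      simpa using this
    exact t1.eventually (gt_mem_nhds (by positivity))
  have ev2 : ∀ᶠ n : ℕ in atTop, 6 * Real.log 2 / δ ≤ Real.log n :=
    (Real.tendsto_log_atTop.comp tendsto_natCast_atTop_atTop).eventually_ge_atTop _
  filter_upwards [ev1, ev2, eventually_ge_atTop 2] with n h1 h2 h3
  -- basic facts
  have hNpos : (0:ℝ) < n := by positivity
  have hN2 : (2:ℝ) ≤ n := by exact_mod_cast h3
  have hlog2pos : 0 < Real.log 2 := Real.log_pos (by norm_num)
  have hlogNpos : 0 < Real.log n :=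
    lt_of_lt_of_le hlog2pos (Real.log_le_log (by norm_num) hN2)
  set A := aF m₀ n with hAdef
  have hAlow : (n:ℝ) ^ (1 - δ) ≤ (A : ℝ) := by
    rw [hAdef, aF, ← hδdef]; exact Nat.le_ceil _
  have hAhigh : (A : ℝ) ≤ (n:ℝ) ^ (1 - δ) + 1 := by
    rw [hAdef, aF, ← hδdef]
    exact le_of_lt (Nat.ceil_lt_add_one (by positivity))
  have hrpow_pos : (0:ℝ) < (n:ℝ) ^ (1 - δ) := by positivity
  have hA1 : 1 ≤ A := by
    rw [hAdef, aF]
    exact Nat.one_le_iff_ne_zero.2 (by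
      intro h
      have := Nat.ceil_eq_zero.1 h
      rw [← hδdef] at this
      exact absurd this (not_le.2 hrpow_pos))
  have hApos : (0:ℝ) < A := by exact_mod_cast hA1
  -- key1
  have hsplit : (n:ℝ) ^ (1 - δ) = (n:ℝ) * (n:ℝ) ^ (-δ) := by
    rw [show (1 - δ) = 1 + (-δ) by ring, Real.rpow_add hNpos, Real.rpow_one]
  have key1 : 2 * (n:ℝ) ^ (1 - δ) + ((m₀:ℝ) + 4) ≤ δ / 2 * n := by
    have := mul_le_mul_of_nonneg_left (le_of_lt h1) (le_of_lt hNpos)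
    calc 2 * (n:ℝ) ^ (1 - δ) + ((m₀:ℝ) + 4)
        = (n:ℝ) * (2 * ((n:ℝ)) ^ (-δ) + ((m₀:ℝ) + 4) / n) := by
          rw [hsplit]; field_simp
      _ ≤ (n:ℝ) * (δ / 2) := this
      _ = δ / 2 * n := by ring
  -- second claim
  have claim2 : (m₀ + 2) + 2 * A ≤ n := by
    have hreal : ((m₀ : ℝ) + 2) + 2 * (A : ℝ) ≤ (n : ℝ) := by
      have : ((m₀ : ℝ) + 2) + 2 * (A : ℝ) ≤ 2 * (n:ℝ) ^ (1 - δ) + ((m₀:ℝ) + 4) := by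
        nlinarith [hAhigh]
      refine this.trans (key1.trans ?_)
      nlinarith [hδle, hNpos]
    exact_mod_cast (by push_cast; exact hreal : ((m₀ + 2 + 2 * A : ℕ) : ℝ) ≤ (n:ℝ))
  refine ⟨?_, claim2, hA1⟩
  -- main inequality
  set b₀ := n / (16 * (m₀ + 1)) with hb₀def
  set Ee := n - (b₀ + 1) with hEdef
  set c₀ := n - (m₀ + 1) - 2 * A with hc₀def
  -- cast bounds
  have hb₀len : b₀ ≤ n := Nat.div_le_self _ _
  have hb₀low : 2 * δ * (n:ℝ) - 1 ≤ (b₀ : ℝ) := by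
    have h16pos : 0 < 16 * (m₀ + 1) := by positivity
    have hmod : n < 16 * (m₀ + 1) * b₀ + 16 * (m₀ + 1) := by
      have e1 : 16 * (m₀ + 1) * b₀ + n % (16 * (m₀ + 1)) = n := Nat.div_add_mod n _
      have e2 : n % (16 * (m₀ + 1)) < 16 * (m₀ + 1) := Nat.mod_lt n h16pos
      calc n = 16 * (m₀ + 1) * b₀ + n % (16 * (m₀ + 1)) := e1.symm
        _ < 16 * (m₀ + 1) * b₀ + 16 * (m₀ + 1) := Nat.add_lt_add_left e2 _

    have hcast : (n : ℝ) < 16 * ((m₀:ℝ) + 1) * ((b₀:ℝ) + 1) := by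
      have : ((n:ℕ):ℝ) < ((16 * (m₀ + 1) * b₀ + 16 * (m₀ + 1) : ℕ) : ℝ) := by
        exact_mod_cast hmod
      push_cast at this
      nlinarith
    have h16r : (0:ℝ) < 16 * ((m₀:ℝ) + 1) := by positivity
    have hkey : 2 * δ * (n:ℝ) < (b₀:ℝ) + 1 := by
      rw [h2δ, div_mul_eq_mul_div, div_lt_iff₀ h16r]
      nlinarith [hcast]
    linarith
  have hEle : (Ee : ℝ) ≤ (n:ℝ) - (b₀:ℝ) := by
    have h1' : Ee ≤ n - b₀ := Nat.sub_le_sub_left (Nat.le_succ b₀) n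
    have h2' : ((n - b₀ : ℕ) : ℝ) = (n:ℝ) - b₀ := by
      rw [Nat.cast_sub hb₀len]
    calc (Ee:ℝ) ≤ ((n - b₀ : ℕ):ℝ) := by exact_mod_cast h1'
      _ = (n:ℝ) - b₀ := h2'
  have hEleN : (Ee : ℝ) ≤ (n:ℝ) := by
    have : Ee ≤ n := Nat.sub_le _ _
    exact_mod_cast this
  have hEnonneg : (0:ℝ) ≤ (Ee:ℝ) := Nat.cast_nonneg _
  have hclaim2' : (m₀ + 1) + 2 * A ≤ n := le_trans (by omega) claim2
  have hc₀cast : (c₀ : ℝ) = (n:ℝ) - ((m₀:ℝ) + 1) - 2 * A := by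
    have he : c₀ = n - ((m₀ + 1) + 2 * A) := by rw [hc₀def]; omega
    rw [he, Nat.cast_sub hclaim2']
    push_cast
    ring
  have hGpos : (n:ℝ) - ((m₀:ℝ) + 3) - 2 * (n:ℝ)^(1-δ) ≥ (n:ℝ) / 2 := by
    nlinarith [key1, hδle, hNpos]
  have hc₀low : (n:ℝ) - ((m₀:ℝ) + 3) - 2 * (n:ℝ)^(1-δ) ≤ (c₀ : ℝ) := by
    rw [hc₀cast]
    nlinarith [hAhigh]
  have hc₀nonneg : (0:ℝ) ≤ (c₀:ℝ) := by positivity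
  have hloga : (1 - δ) * Real.log n ≤ Real.log A := by
    calc (1 - δ) * Real.log n = Real.log ((n:ℝ) ^ (1 - δ)) := (Real.log_rpow hNpos _).symm
      _ ≤ Real.log A := Real.log_le_log hrpow_pos hAlow
  have hlogn1 : Real.log ((n:ℝ) + 1) ≤ Real.log n + Real.log 2 := by
    calc Real.log ((n:ℝ) + 1) ≤ Real.log (2 * n) := by
          apply Real.log_le_log (by positivity)
          nlinarith
      _ = Real.log 2 + Real.log n := Real.log_mul (by norm_num) (by positivity)
      _ = Real.log n + Real.log 2 := by ring
  -- the main log inequality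
  have hmainlog : ((n:ℝ) + 2) * Real.log 2 + (Ee:ℝ) * Real.log ((n:ℝ) + 1)
      ≤ (c₀:ℝ) * Real.log A := by
    have step1 : ((n:ℝ) + 2) * Real.log 2 + (Ee:ℝ) * Real.log ((n:ℝ) + 1)
        ≤ (2 * (n:ℝ) + 2) * Real.log 2 + ((n:ℝ) - 2 * δ * n + 1) * Real.log n := by
      have e1 : (Ee:ℝ) * Real.log ((n:ℝ) + 1) ≤ (Ee:ℝ) * (Real.log n + Real.log 2) :=
        mul_le_mul_of_nonneg_left hlogn1 hEnonneg
      have e2 : (Ee:ℝ) * Real.log n ≤ ((n:ℝ) - 2 * δ * n + 1) * Real.log n := by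
        apply mul_le_mul_of_nonneg_right _ (le_of_lt hlogNpos)
        nlinarith [hEle, hb₀low]
      have e3 : (Ee:ℝ) * Real.log 2 ≤ (n:ℝ) * Real.log 2 :=
        mul_le_mul_of_nonneg_right hEleN (le_of_lt hlog2pos)
      nlinarith
    have step2 : (2 * (n:ℝ) + 2) * Real.log 2 + ((n:ℝ) - 2 * δ * n + 1) * Real.log n
        ≤ (c₀:ℝ) * ((1 - δ) * Real.log n) := by
      have hG : (n:ℝ) - ((m₀:ℝ) + 3) - 2 * (n:ℝ)^(1-δ) - δ * n ≤ (c₀:ℝ) * (1 - δ) := by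
        have hc₀leN : (c₀:ℝ) ≤ n := by
          have : c₀ ≤ n := by omega
          exact_mod_cast this
        have e : (c₀:ℝ) * (1 - δ) = (c₀:ℝ) - δ * (c₀:ℝ) := by ring
        have e2 : δ * (c₀:ℝ) ≤ δ * (n:ℝ) := mul_le_mul_of_nonneg_left hc₀leN hδpos.le
        linarith [hc₀low]
      have hcoef : ((n:ℝ) - 2*δ*n + 1) + (δ * n - 2 * (n:ℝ)^(1-δ) - ((m₀:ℝ) + 4))
          ≤ (n:ℝ) - ((m₀:ℝ) + 3) - 2 * (n:ℝ)^(1-δ) - δ * n := le_of_eq (by ring)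
      have hmargin : (2 * (n:ℝ) + 2) * Real.log 2
          ≤ (δ * n - 2 * (n:ℝ)^(1-δ) - ((m₀:ℝ) + 4)) * Real.log n := by
        have hm1 : δ / 2 * n ≤ δ * n - 2 * (n:ℝ)^(1-δ) - ((m₀:ℝ) + 4) := by linarith [key1]
        have hm2 : (2 * (n:ℝ) + 2) * Real.log 2 ≤ 3 * (n:ℝ) * Real.log 2 :=
          mul_le_mul_of_nonneg_right (by linarith) hlog2pos.le
        have hm3 : 3 * (n:ℝ) * Real.log 2 ≤ δ / 2 * n * Real.log n := by
          have h6 : 6 * Real.log 2 ≤ Real.log n * δ := (div_le_iff₀ hδpos).1 h2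
          have h7 : 3 * Real.log 2 ≤ δ / 2 * Real.log n := by linarith
          calc 3 * (n:ℝ) * Real.log 2 = (n:ℝ) * (3 * Real.log 2) := by ring
            _ ≤ (n:ℝ) * (δ / 2 * Real.log n) := mul_le_mul_of_nonneg_left h7 hNpos.le
            _ = δ / 2 * n * Real.log n := by ring
        have hm4 : δ / 2 * n * Real.log n
            ≤ (δ * n - 2 * (n:ℝ)^(1-δ) - ((m₀:ℝ) + 4)) * Real.log n :=
          mul_le_mul_of_nonneg_right hm1 (le_of_lt hlogNpos)
        linarith
      have expand : (c₀:ℝ) * ((1-δ) * Real.log n) = ((c₀:ℝ) * (1-δ)) * Real.log n := by ring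
      rw [expand]
      have final : ((n:ℝ) - 2*δ*n + 1) * Real.log n
          + (δ * n - 2 * (n:ℝ)^(1-δ) - ((m₀:ℝ) + 4)) * Real.log n
          ≤ ((c₀:ℝ) * (1 - δ)) * Real.log n := by
        rw [← add_mul]
        apply mul_le_mul_of_nonneg_right _ (le_of_lt hlogNpos)
        linarith [hcoef, hG]
      linarith [hmargin, final]
    have step3 : (c₀:ℝ) * ((1 - δ) * Real.log n) ≤ (c₀:ℝ) * Real.log A :=
      mul_le_mul_of_nonneg_left hloga hc₀nonneg
    linarith
  -- convert to the natural number inequality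
  have hreal : ((2 * (2 ^ (n + 1) * (n + 1) ^ Ee) : ℕ) : ℝ) ≤ ((A ^ c₀ : ℕ) : ℝ) := by
    push_cast
    have lhs_eq : (2:ℝ) * (2 ^ (n + 1) * ((n:ℝ) + 1) ^ Ee) = 2 ^ (n + 2) * ((n:ℝ) + 1) ^ Ee := by
      ring
    rw [lhs_eq]
    have hlhs_pos : (0:ℝ) < 2 ^ (n + 2) * ((n:ℝ) + 1) ^ Ee := by positivity
    have hrhs_pos : (0:ℝ) < (A:ℝ) ^ c₀ := by positivity
    rw [← Real.log_le_log_iff hlhs_pos hrhs_pos]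
    rw [Real.log_mul (by positivity) (by positivity), Real.log_pow, Real.log_pow, Real.log_pow]
    push_cast
    exact hmainlog
  exact_mod_cast hreal


/-- Eventually, `S n j ≤ S n (j+1)` for all `j ≤ m₀`. -/
theorem mono_step (m₀ : ℕ) : ∀ᶠ n : ℕ in atTop,
    ∀ j ≤ m₀, (S n j).card ≤ (S n (j + 1)).card := by
  filter_upwards [E1 m₀, eventually_ge_atTop (12 * m₀ + 8)] with n hE hn12
  obtain ⟨hE1, hEa, hEA1⟩ := hE
  intro j hj
  set b₀ := n / (16 * (m₀ + 1)) with hb₀def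
  set A := aF m₀ n with hAdef
  set Aset := (univ : Finset (Finpartition (univ : Finset (Fin n)))).filter
    (fun P => sing P = j ∧ P.parts.card ≤ b₀) with hAset
  set Cset := (univ : Finset (Finpartition (univ : Finset (Fin n)))).filter
    (fun P => b₀ + 1 ≤ P.parts.card) with hCset
  -- decomposition
  have hdecomp : (S n j).card ≤ Aset.card + Cset.card := by
    have h1 := Finset.card_filter_add_card_filter_not
      (s := S n j) (p := fun P => P.parts.card ≤ b₀)
    have hA : (S n j).filter (fun P => P.parts.card ≤ b₀) = Aset := by
      rw [hAset]
      unfold S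
      rw [Finset.filter_filter]
    have hC : (S n j).filter (fun P => ¬ P.parts.card ≤ b₀) ⊆ Cset := by
      intro P hP
      rw [Finset.mem_filter] at hP
      rw [hCset, Finset.mem_filter]
      exact ⟨mem_univ _, by omega⟩
    rw [hA] at h1
    have := Finset.card_le_card hC
    omega
  -- step 2 : 2 * Aset.card ≤ (S n (j+1)).card
  have hu : 16 * ((m₀ + 1) * b₀) ≤ n := by
    calc 16 * ((m₀ + 1) * b₀) = b₀ * (16 * (m₀ + 1)) := by ring
      _ ≤ n := Nat.div_mul_le_self _ _
  have hb₀u : b₀ ≤ (m₀ + 1) * b₀ := Nat.le_mul_of_pos_left _ (by omega)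
  have hLn : 2 * ((b₀ + 1) * (j + 1)) + (j + 2 * b₀) ≤ n := by
    have t2 : (b₀ + 1) * (j + 1) ≤ (b₀ + 1) * (m₀ + 1) :=
      Nat.mul_le_mul_left _ (by omega)
    have t3 : (b₀ + 1) * (m₀ + 1) = (m₀ + 1) * b₀ + (m₀ + 1) := by ring
    omega
  have h2A : 2 * Aset.card ≤ (S n (j + 1)).card := by
    have hX : 0 < (b₀ + 1) * (j + 1) := by positivity
    apply Nat.le_of_mul_le_mul_left _ hX
    calc (b₀ + 1) * (j + 1) * (2 * Aset.card)
        = Aset.card * (2 * ((b₀ + 1) * (j + 1))) := by ring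
      _ ≤ Aset.card * (n - (j + 2 * b₀)) := Nat.mul_le_mul_left _ (by omega)
      _ ≤ (b₀ + 1) * ((j + 1) * (S n (j + 1)).card) := stepA n j b₀
      _ = (b₀ + 1) * (j + 1) * (S n (j + 1)).card := by ring
  -- step 3 : 2 * Cset.card ≤ (S n (j+1)).card
  have hcj : (j + 1) + (2 * A + (n - (j + 1) - 2 * A)) = n := by omega
  have hlb := lower_bound (j + 1) A (n - (j + 1) - 2 * A) hcj
  have h2C : 2 * Cset.card ≤ (S n (j + 1)).card := by
    calc 2 * Cset.card ≤ 2 * (2 ^ (n + 1) * (n + 1) ^ (n - (b₀ + 1))) :=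
          Nat.mul_le_mul_left _ (manyParts_bound n (b₀ + 1))
      _ ≤ A ^ (n - (m₀ + 1) - 2 * A) := hE1
      _ ≤ A ^ (n - (j + 1) - 2 * A) := Nat.pow_le_pow_right hEA1 (by omega)
      _ ≤ (S n (j + 1)).card := hlb
  omega

/-- chain of inequalities and sum. -/
theorem bell_lower (n k K : ℕ)
    (hmono : ∀ j ≤ k + K, (S n j).card ≤ (S n (j + 1)).card) :
    (K + 1) * (S n k).card ≤ Fintype.card (Finpartition (univ : Finset (Fin n))) := by
  classical
  have hchain : ∀ i ≤ K, (S n k).card ≤ (S n (k + i)).card := by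
    intro i hi
    induction i with
    | zero => simp
    | succ m ih =>
      calc (S n k).card ≤ (S n (k + m)).card := ih (by omega)
        _ ≤ (S n (k + m + 1)).card := hmono (k + m) (by omega)
        _ = (S n (k + (m+1))).card := by ring_nf
  have hdisj : ∀ i ∈ Finset.range (K + 1), ∀ i' ∈ Finset.range (K + 1), i ≠ i' →
      Disjoint (S n (k + i)) (S n (k + i')) := by
    intro i _ i' _ hii
    rw [Finset.disjoint_left]
    intro P hP hP'
    rw [mem_S] at hP hP'
    omega
  calc (K + 1) * (S n k).card = ∑ _i ∈ Finset.range (K + 1), (S n k).card := by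
        rw [Finset.sum_const, Finset.card_range, smul_eq_mul]
    _ ≤ ∑ i ∈ Finset.range (K + 1), (S n (k + i)).card := by
        apply Finset.sum_le_sum
        intro i hi
        exact hchain i (by simpa using Nat.lt_succ_iff.1 (Finset.mem_range.1 hi))
    _ = ((Finset.range (K + 1)).biUnion (fun i => S n (k + i))).card :=
        (Finset.card_biUnion hdisj).symm
    _ ≤ (univ : Finset (Finpartition (univ : Finset (Fin n)))).card :=
        Finset.card_le_card (Finset.subset_univ _)
    _ = Fintype.card (Finpartition (univ : Finset (Fin n))) := Finset.card_univ

theorem partSingletons_eq (n k : ℕ) : partSingletons n k = (S n k).card := by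
  unfold partSingletons
  rw [Nat.card_eq_fintype_card, Fintype.card_subtype]
  unfold S sing
  congr 1

theorem bell_eq (n : ℕ) :
    bell n = Fintype.card (Finpartition (univ : Finset (Fin n))) :=
  Nat.card_eq_fintype_card

theorem bell_pos (n : ℕ) : 0 < bell n := by
  rw [bell_eq]
  exact Fintype.card_pos_iff.2 ⟨⊥⟩

theorem key (k K : ℕ) : ∀ᶠ n : ℕ in atTop,
    (K + 1) * partSingletons n k ≤ bell n := by
  filter_upwards [mono_step (k + K)] with n hmono
  rw [partSingletons_eq, bell_eq]
  exact bell_lower n k K hmono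


end SPS

open SPS in
theorem set_partitions_singletons_ratio (k : ℕ) :
    Tendsto (fun n : ℕ => (partSingletons n k : ℝ) / (bell n : ℝ)) atTop (nhds 0) := by
  rw [Metric.tendsto_atTop]
  intro ε hε
  set K := ⌈1 / ε⌉₊ with hK
  obtain ⟨N, hN⟩ := eventually_atTop.1 (key k K)
  refine ⟨N, fun n hn => ?_⟩
  have h1 := hN n hn
  have hBpos : (0:ℝ) < (bell n : ℝ) := by exact_mod_cast bell_pos n
  have hKpos : (0:ℝ) < (K:ℝ) + 1 := by positivity
  rw [Real.dist_eq, sub_zero, abs_of_nonneg (by positivity)]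
  have hKε : 1 / ((K:ℝ) + 1) < ε := by
    rw [div_lt_iff₀ hKpos]
    have h2 : 1 / ε ≤ (K:ℝ) := by rw [hK]; exact_mod_cast Nat.le_ceil _
    have h3 : 1 / ε < (K:ℝ) + 1 := by linarith
    calc (1:ℝ) = ε * (1/ε) := by field_simp
      _ < ε * ((K:ℝ) + 1) := by
          apply mul_lt_mul_of_pos_left h3 hε
  have hcast : ((K:ℝ) + 1) * (partSingletons n k : ℝ) ≤ (bell n : ℝ) := by
    exact_mod_cast h1
  rw [div_lt_iff₀ hBpos]
  calc (partSingletons n k : ℝ) ≤ (bell n : ℝ) / ((K:ℝ) + 1) := by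
        rw [le_div_iff₀ hKpos]; linarith
    _ = (bell n : ℝ) * (1 / ((K:ℝ) + 1)) := by ring
    _ < (bell n : ℝ) * ε := by
        apply mul_lt_mul_of_pos_left hKε hBpos
    _ = ε * (bell n : ℝ) := by ring
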